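/- Let a(n) denote the number of permutations in S_n avoiding all three patterns 123, 132, and 3214. Then a(n) satisfies the Tribonacci recurrence: a(n) = a(n−1) + a(n−2) + a(n−3) for all n ≥ 5. -/

import Mathlib

/-- `σ` contains the pattern `p` (given as a sequence of values). -/
def PermContains {n k : ℕ} (σ : Equiv.Perm (Fin n)) (p : Fin k → Fin k) : Prop :=
  ∃ f : Fin k → Fin n, StrictMono f ∧ ∀ i j : Fin k, p i < p j ↔ σ (f i) < σ (f j)

/-- `σ` avoids the pattern `p`. -/
def PermAvoids {n k : ℕ} (σ : Equiv.Perm (Fin n)) (p : Fin k → Fin k) : Prop :=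
  ¬ PermContains σ p

def p123 : Fin 3 → Fin 3 := ![0, 1, 2]
def p132 : Fin 3 → Fin 3 := ![0, 2, 1]
def p213 : Fin 3 → Fin 3 := ![1, 0, 2]
def p231 : Fin 3 → Fin 3 := ![1, 2, 0]
def p312 : Fin 3 → Fin 3 := ![2, 0, 1]
def p321 : Fin 3 → Fin 3 := ![2, 1, 0]

/-- the list `a, a-1, ..., b` (empty if `b > a`). -/
def descList (a b : ℕ) : List ℕ := (List.range (a + 1 - b)).map (fun j => a - j)

/-- the list `a, a+1, ..., b` (empty if `b > a`). -/
def ascList (a b : ℕ) : List ℕ := (List.range (b + 1 - a)).map (fun j => a + j)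

abbrev p3214 : Fin 4 → Fin 4 := ![2, 1, 0, 3]

open Equiv

lemma strictMono_vec3 {n : ℕ} {a b c : Fin n} (h1 : a < b) (h2 : b < c) :
    StrictMono ![a, b, c] := by
  rw [Fin.strictMono_iff_lt_succ]
  intro i
  fin_cases i <;> simpa

lemma strictMono_vec4 {n : ℕ} {a b c d : Fin n} (h1 : a < b) (h2 : b < c) (h3 : c < d) :
    StrictMono ![a, b, c, d] := by
  rw [Fin.strictMono_iff_lt_succ]
  intro i
  fin_cases i <;> simpa

lemma contains123 {n : ℕ} (σ : Equiv.Perm (Fin n)) {a b c : Fin n} (hab : a < b) (hbc : b < c)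
    (h1 : σ a < σ b) (h2 : σ b < σ c) : PermContains σ p123 := by
  refine ⟨![a,b,c], strictMono_vec3 hab hbc, ?_⟩
  intro i j
  fin_cases i <;> fin_cases j <;>
    simp [p123] <;>
    first | exact h1 | exact h2 | exact h1.trans h2 | exact h1.le | exact h2.le | exact (h1.trans h2).le

lemma contains132 {n : ℕ} (σ : Equiv.Perm (Fin n)) {a b c : Fin n} (hab : a < b) (hbc : b < c)
    (h1 : σ a < σ c) (h2 : σ c < σ b) : PermContains σ p132 := by
  refine ⟨![a,b,c], strictMono_vec3 hab hbc, ?_⟩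
  intro i j
  fin_cases i <;> fin_cases j <;>
    simp [p132] <;>
    first | exact h1 | exact h2 | exact h1.trans h2 | exact h1.le | exact h2.le | exact (h1.trans h2).le

lemma contains3214 {n : ℕ} (σ : Equiv.Perm (Fin n)) {a b c d : Fin n}
    (hab : a < b) (hbc : b < c) (hcd : c < d)
    (h1 : σ c < σ b) (h2 : σ b < σ a) (h3 : σ a < σ d) : PermContains σ p3214 := by
  refine ⟨![a,b,c,d], strictMono_vec4 hab hbc hcd, ?_⟩
  intro i j
  fin_cases i <;> fin_cases j <;>
    simp [p3214] <;>
    first | exact h1 | exact h2 | exact h3 | exact h1.trans h2 | exact h2.trans h3 | exact (h1.trans h2).trans h3 | exact h1.le | exact h2.le | exact h3.le | exact (h1.trans h2).le | exact (h2.trans h3).le | exact ((h1.trans h2).trans h3).le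

section S2
variable {n k : ℕ}

open Equiv

/-- lift a pattern occurrence through a one-step reduction -/
lemma contains_lift (σ : Equiv.Perm (Fin (n+1))) (v : Fin (n+1)) (τ : Equiv.Perm (Fin n))
    (H : ∀ i, σ i.succ = v.succAbove (τ i)) (p : Fin k → Fin k) :
    PermContains τ p → PermContains σ p := by
  rintro ⟨f, hf, hp⟩
  refine ⟨fun i => (f i).succ, Fin.strictMono_succ.comp hf, fun i j => ?_⟩
  rw [H, H, Fin.succAbove_lt_succAbove_iff]
  exact hp i j

lemma contains_drop (σ : Equiv.Perm (Fin (n+1))) (v : Fin (n+1)) (τ : Equiv.Perm (Fin n))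
    (H : ∀ i, σ i.succ = v.succAbove (τ i)) (p : Fin (k+1) → Fin (k+1)) :
    PermContains σ p → PermContains τ p ∨
      ∃ f : Fin (k+1) → Fin (n+1), StrictMono f ∧
        (∀ i j, p i < p j ↔ σ (f i) < σ (f j)) ∧ f 0 = 0 := by
  rintro ⟨f, hf, hp⟩
  by_cases h0 : f 0 = 0
  · exact Or.inr ⟨f, hf, hp, h0⟩
  · left
    have hne : ∀ i, f i ≠ 0 := by
      intro i hi
      exact h0 (le_antisymm (hi ▸ hf.monotone (Fin.zero_le i)) (Fin.zero_le _))
    refine ⟨fun i => (f i).pred (hne i), ?_, fun i j => ?_⟩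
    · intro i j hij
      simpa [Fin.pred_lt_pred_iff] using hf hij
    · rw [← Fin.succAbove_lt_succAbove_iff (p := v), ← H, ← H,
        Fin.succ_pred, Fin.succ_pred]
      exact hp i j

lemma strictMono_val_le {a b : ℕ} {f : Fin a → Fin b} (hf : StrictMono f) (i : Fin a) :
    (i : ℕ) ≤ (f i : ℕ) := by
  rcases a with _ | a
  · exact i.elim0
  induction i using Fin.induction with
  | zero => exact Nat.zero_le _
  | succ i ih =>
    have := hf (Fin.castSucc_lt_succ : i.castSucc < i.succ)
    simp only [Fin.lt_def, Fin.coe_castSucc, Fin.val_succ] at this ih ⊢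
    omega

/-- no occurrence starting at position 0 when `σ 0` is the largest value -/
lemma no_occ_top (σ : Equiv.Perm (Fin (n+1))) (h0 : σ 0 = Fin.last n)
    (p : Fin (k+1) → Fin (k+1)) (j : Fin (k+1)) (hj : p 0 < p j)
    (f : Fin (k+1) → Fin (n+1)) (hp : ∀ i j, p i < p j ↔ σ (f i) < σ (f j))
    (hf0 : f 0 = 0) : False := by
  have := (hp 0 j).mp hj
  rw [hf0, h0] at this
  exact absurd this (not_lt.mpr (Fin.le_last _))

lemma eq_last_of_gt {m : ℕ} {x : Fin (m+2)} (h : (Fin.last m).castSucc < x) :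
    x = Fin.last (m+1) := by
  rw [Fin.lt_def] at h
  simp only [Fin.coe_castSucc, Fin.val_last] at h
  have := x.isLt
  apply Fin.ext
  simp only [Fin.val_last]
  omega

/-- no occurrence starting at position 0 when `σ 0` is second largest and two pattern
values exceed `p 0` -/
lemma no_occ_second (σ : Equiv.Perm (Fin (n+2))) (h0 : σ 0 = (Fin.last n).castSucc)
    (p : Fin (k+1) → Fin (k+1)) (j₁ j₂ : Fin (k+1)) (hj₁ : p 0 < p j₁) (hj₂ : p 0 < p j₂)
    (hjj : j₁ ≠ j₂)
    (f : Fin (k+1) → Fin (n+2)) (hf : StrictMono f)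
    (hp : ∀ i j, p i < p j ↔ σ (f i) < σ (f j))
    (hf0 : f 0 = 0) : False := by
  have e1 : σ (f j₁) = Fin.last (n+1) :=
    eq_last_of_gt (h0 ▸ hf0 ▸ (hp 0 j₁).mp hj₁)
  have e2 : σ (f j₂) = Fin.last (n+1) :=
    eq_last_of_gt (h0 ▸ hf0 ▸ (hp 0 j₂).mp hj₂)
  exact hjj (hf.injective (σ.injective (e1.trans e2.symm)))

/-- no occurrence starting at position 0 when `σ 0` is second largest, the top value occurs
at position `t`, and the unique pattern value above `p 0` sits at index `j₀ > t`. -/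
lemma no_occ_second' (σ : Equiv.Perm (Fin (n+2))) (h0 : σ 0 = (Fin.last n).castSucc)
    (t : Fin (n+2)) (ht : σ t = Fin.last (n+1))
    (p : Fin (k+1) → Fin (k+1)) (j₀ : Fin (k+1)) (hj : p 0 < p j₀) (htj : (t : ℕ) < (j₀ : ℕ))
    (f : Fin (k+1) → Fin (n+2)) (hf : StrictMono f)
    (hp : ∀ i j, p i < p j ↔ σ (f i) < σ (f j))
    (hf0 : f 0 = 0) : False := by
  have e1 : σ (f j₀) = Fin.last (n+1) :=
    eq_last_of_gt (h0 ▸ hf0 ▸ (hp 0 j₀).mp hj)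
  have : f j₀ = t := σ.injective (e1.trans ht.symm)
  have := strictMono_val_le hf j₀
  omega

end S2

section S3

open Equiv

variable {n : ℕ}

private def peelAux (v : Fin (n+1)) (σ : {σ : Equiv.Perm (Fin (n+1)) // σ 0 = v}) :
    Equiv.Perm (Fin n) :=
  Equiv.removeNone ((finSuccEquiv' 0).symm.trans (σ.1.trans (finSuccEquiv' v)))

lemma peelAux_key (v : Fin (n+1)) (σ : {σ : Equiv.Perm (Fin (n+1)) // σ 0 = v}) (i : Fin n) :
    σ.1 i.succ = v.succAbove (peelAux v σ i) := by
  set e := (finSuccEquiv' 0).symm.trans (σ.1.trans (finSuccEquiv' v)) with he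
  have hnone : e none = none := by
    simp [he, finSuccEquiv'_symm_none, σ.2, finSuccEquiv'_at]
  have hsome : ∃ x, e (some i) = some x := by
    rcases h : e (some i) with _ | x
    · exact absurd (e.injective (h.trans hnone.symm)) (by simp)
    · exact ⟨x, rfl⟩
  have hrm := Equiv.removeNone_some e hsome
  have heval : e (some i) = finSuccEquiv' v (σ.1 i.succ) := by
    rw [he]
    simp only [Equiv.trans_apply]
    rw [finSuccEquiv'_symm_some, Fin.succAbove_zero]
  rw [heval] at hrm
  have h2 := congrArg (finSuccEquiv' v).symm hrm
  rw [Equiv.symm_apply_apply, finSuccEquiv'_symm_some] at h2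
  exact h2.symm

private def unpeelAux (v : Fin (n+1)) (τ : Equiv.Perm (Fin n)) :
    {σ : Equiv.Perm (Fin (n+1)) // σ 0 = v} :=
  ⟨(finSuccEquiv' 0).trans (τ.optionCongr.trans (finSuccEquiv' v).symm), by
    simp [Equiv.trans_apply, finSuccEquiv'_at, finSuccEquiv'_symm_none]⟩

lemma unpeelAux_key (v : Fin (n+1)) (τ : Equiv.Perm (Fin n)) (i : Fin n) :
    (unpeelAux v τ).1 i.succ = v.succAbove (τ i) := by
  show ((finSuccEquiv' 0).trans (τ.optionCongr.trans (finSuccEquiv' v).symm)) i.succ = _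
  rw [Equiv.trans_apply, Equiv.trans_apply]
  rw [show (finSuccEquiv' (0 : Fin (n+1))) i.succ = some i by
    rw [← Fin.succAbove_zero]
    exact finSuccEquiv'_succAbove 0 i]
  simp [finSuccEquiv'_symm_some]

/-- peeling off position 0 (value `v`) of a permutation -/
def peel (v : Fin (n+1)) : {σ : Equiv.Perm (Fin (n+1)) // σ 0 = v} ≃ Equiv.Perm (Fin n) where
  toFun := peelAux v
  invFun := unpeelAux v
  left_inv := by
    intro σ
    apply Subtype.ext
    apply Equiv.ext
    intro x
    induction x using Fin.cases with
    | zero => rw [σ.2, (unpeelAux v (peelAux v σ)).2]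
    | succ i => rw [unpeelAux_key, peelAux_key]
  right_inv := by
    intro τ
    apply Equiv.ext
    intro i
    have h1 := peelAux_key v (unpeelAux v τ) i
    rw [unpeelAux_key] at h1
    exact (Fin.succAbove_right_injective h1.symm)

lemma peel_key (v : Fin (n+1)) (σ : {σ : Equiv.Perm (Fin (n+1)) // σ 0 = v}) (i : Fin n) :
    σ.1 i.succ = v.succAbove (peel v σ i) := peelAux_key v σ i

lemma peel_symm_key (v : Fin (n+1)) (τ : Equiv.Perm (Fin n)) (i : Fin n) :
    ((peel v).symm τ).1 i.succ = v.succAbove (τ i) := unpeelAux_key v τ i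

end S3

section S4

open Equiv

variable {n : ℕ}

def AllAvoid {n : ℕ} (σ : Equiv.Perm (Fin n)) : Prop :=
  PermAvoids σ p123 ∧ PermAvoids σ p132 ∧ PermAvoids σ p3214

lemma fin_val_one : ((1 : Fin (n+2)) : ℕ) = 1 := rfl

lemma fin_val_two : ((2 : Fin (n+3)) : ℕ) = 2 := by
  rfl

lemma fin_one_eq_succ_zero : (1 : Fin (n+2)) = (0 : Fin (n+1)).succ := by
  apply Fin.ext
  simp [fin_val_one]

lemma fin_two_eq_succ_one : (2 : Fin (n+3)) = (1 : Fin (n+2)).succ := by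
  apply Fin.ext
  simp [fin_val_two, fin_val_one]

/-- transfer of avoidance when `σ 0` is the top value -/
lemma allAvoid_peel_top (σ : {σ : Equiv.Perm (Fin (n+1)) // σ 0 = Fin.last n}) :
    AllAvoid σ.1 ↔ AllAvoid (peel (Fin.last n) σ) := by
  have H := peel_key (Fin.last n) σ
  constructor
  · rintro ⟨h1, h2, h3⟩
    refine ⟨fun hc => ?_, fun hc => ?_, fun hc => ?_⟩
    · exact h1 (contains_lift _ _ _ H _ hc)
    · exact h2 (contains_lift _ _ _ H _ hc)
    · exact h3 (contains_lift _ _ _ H _ hc)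
  · rintro ⟨h1, h2, h3⟩
    refine ⟨fun hc => ?_, fun hc => ?_, fun hc => ?_⟩
    · rcases contains_drop _ _ _ H _ hc with h | ⟨f, hf, hp, hf0⟩
      · exact h1 h
      · exact no_occ_top _ σ.2 _ 2 (by decide) f hp hf0
    · rcases contains_drop _ _ _ H _ hc with h | ⟨f, hf, hp, hf0⟩
      · exact h2 h
      · exact no_occ_top _ σ.2 _ 1 (by decide) f hp hf0
    · rcases contains_drop _ _ _ H _ hc with h | ⟨f, hf, hp, hf0⟩
      · exact h3 h
      · exact no_occ_top _ σ.2 _ 3 (by decide) f hp hf0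

/-- transfer of avoidance when `σ 0` is the second value and the top value is at position
`t` with `t < 3`. -/
lemma allAvoid_peel_second (σ : {σ : Equiv.Perm (Fin (n+2)) // σ 0 = (Fin.last n).castSucc})
    (t : Fin (n+2)) (ht : σ.1 t = Fin.last (n+1)) (ht3 : (t : ℕ) < 3) :
    AllAvoid σ.1 ↔ AllAvoid (peel ((Fin.last n).castSucc) σ) := by
  have H := peel_key ((Fin.last n).castSucc) σ
  constructor
  · rintro ⟨h1, h2, h3⟩
    refine ⟨fun hc => ?_, fun hc => ?_, fun hc => ?_⟩
    · exact h1 (contains_lift _ _ _ H _ hc)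
    · exact h2 (contains_lift _ _ _ H _ hc)
    · exact h3 (contains_lift _ _ _ H _ hc)
  · rintro ⟨h1, h2, h3⟩
    refine ⟨fun hc => ?_, fun hc => ?_, fun hc => ?_⟩
    · rcases contains_drop _ _ _ H _ hc with h | ⟨f, hf, hp, hf0⟩
      · exact h1 h
      · exact no_occ_second _ σ.2 _ 1 2 (by decide) (by decide) (by decide) f hf hp hf0
    · rcases contains_drop _ _ _ H _ hc with h | ⟨f, hf, hp, hf0⟩
      · exact h2 h
      · exact no_occ_second _ σ.2 _ 1 2 (by decide) (by decide) (by decide) f hf hp hf0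
    · rcases contains_drop _ _ _ H _ hc with h | ⟨f, hf, hp, hf0⟩
      · exact h3 h
      · exact no_occ_second' _ σ.2 t ht _ 3 (by decide)
          (by rw [show (((3 : Fin 4)) : ℕ) = 3 from rfl]; omega) f hf hp hf0

end S4

section S5

open Equiv

lemma two_bigger {n : ℕ} (σ : Equiv.Perm (Fin n)) (h1 : PermAvoids σ p123)
    (h2 : PermAvoids σ p132) (a v w : Fin n) (hv : σ a < v) (hw : σ a < w) (hvw : v ≠ w)
    (hav : a < σ.symm v) (haw : a < σ.symm w) : False := by
  have hσb : σ (σ.symm v) = v := σ.apply_symm_apply v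
  have hσc : σ (σ.symm w) = w := σ.apply_symm_apply w
  rcases lt_trichotomy (σ.symm v) (σ.symm w) with h | h | h
  · rcases lt_trichotomy v w with hh | hh | hh
    · exact h1 (contains123 σ hav h (by rw [hσb]; exact hv) (by rw [hσb, hσc]; exact hh))
    · exact hvw hh
    · exact h2 (contains132 σ hav h (by rw [hσc]; exact hw) (by rw [hσb, hσc]; exact hh))
  · exact hvw (by rw [← hσb, ← hσc, h])
  · rcases lt_trichotomy w v with hh | hh | hh
    · exact h1 (contains123 σ haw h (by rw [hσc]; exact hw) (by rw [hσb, hσc]; exact hh))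
    · exact hvw hh.symm
    · exact h2 (contains132 σ haw h (by rw [hσb]; exact hv) (by rw [hσb, hσc]; exact hh))

lemma symm_ne {n : ℕ} (σ : Equiv.Perm (Fin n)) {a v : Fin n} (h : σ a ≠ v) : σ.symm v ≠ a :=
  fun hh => h (by rw [← hh, Equiv.apply_symm_apply])

variable {m : ℕ}

lemma struct0 (σ : Equiv.Perm (Fin (m+3))) (hA : AllAvoid σ)
    (hne : σ 0 ≠ Fin.last (m+2)) : σ 0 = ⟨m+1, by omega⟩ := by
  by_contra h
  have hv0 : (σ 0 : ℕ) ≤ m := by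
    have hlt := (σ 0).isLt
    rw [Ne, Fin.ext_iff, Fin.val_last] at hne
    rw [Fin.ext_iff] at h
    simp only at h
    omega
  refine two_bigger σ hA.1 hA.2.1 0 ⟨m+1, by omega⟩ (Fin.last (m+2))
    (by rw [Fin.lt_def]; simpa using hv0.trans_lt (by omega : m < m + 1))
    (by rw [Fin.lt_def, Fin.val_last]; omega)
    (by simp [Fin.ext_iff])
    ?_ ?_
  · exact Fin.pos_of_ne_zero (symm_ne σ (by rw [Ne, Fin.ext_iff]; simp only; omega))
  · exact Fin.pos_of_ne_zero (symm_ne σ (by rw [Ne, Fin.ext_iff, Fin.val_last]; omega))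

lemma struct1 (σ : Equiv.Perm (Fin (m+3))) (hA : AllAvoid σ)
    (h0 : σ 0 = ⟨m+1, by omega⟩) (hne : σ 1 ≠ Fin.last (m+2)) : σ 1 = ⟨m, by omega⟩ := by
  by_contra h
  have h10 : (1 : Fin (m+3)) ≠ 0 := by
    rw [Ne, Fin.ext_iff]; simp
  have hσ10 : σ 1 ≠ σ 0 := fun hh => h10 (σ.injective hh)
  have hv1 : (σ 1 : ℕ) < m := by
    have hlt := (σ 1).isLt
    rw [Ne, Fin.ext_iff, Fin.val_last] at hne
    rw [Fin.ext_iff] at h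
    rw [Ne, Fin.ext_iff, h0] at hσ10
    simp at h hσ10
    omega
  have hlt1 : ∀ b : Fin (m+3), b ≠ 0 → b ≠ 1 → (1 : Fin (m+3)) < b := by
    intro b hb0 hb1
    rw [Ne, Fin.ext_iff] at hb0 hb1
    rw [Fin.lt_def]
    simp only [Fin.val_zero, fin_val_one] at hb0 hb1 ⊢
    omega
  refine two_bigger σ hA.1 hA.2.1 1 ⟨m, by omega⟩ (Fin.last (m+2))
    (by rw [Fin.lt_def]; simpa using hv1)
    (by rw [Fin.lt_def, Fin.val_last]; omega)
    (by simp [Fin.ext_iff])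
    ?_ ?_
  · refine hlt1 _ (symm_ne σ ?_) (symm_ne σ ?_)
    · rw [h0, Ne, Fin.ext_iff]; simp only; omega
    · intro hh; rw [hh] at hv1; simp at hv1
  · refine hlt1 _ (symm_ne σ ?_) (symm_ne σ ?_)
    · rw [h0, Ne, Fin.ext_iff, Fin.val_last]; simp only; omega
    · exact hne

lemma struct2 (σ : Equiv.Perm (Fin (m+3))) (hA : AllAvoid σ)
    (h0 : σ 0 = ⟨m+1, by omega⟩) (h1 : σ 1 = ⟨m, by omega⟩) : σ 2 = Fin.last (m+2) := by
  by_contra h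
  have h20 : (2 : Fin (m+3)) ≠ 0 := by rw [Ne, Fin.ext_iff]; simp [fin_val_two, Nat.mod_eq_of_lt (show 2 < m+3 by omega)]
  have h21 : (2 : Fin (m+3)) ≠ 1 := by
    rw [Ne, Fin.ext_iff]; simp [fin_val_two, fin_val_one, Nat.mod_eq_of_lt (show 2 < m+3 by omega)]
  have hσ20 : σ 2 ≠ σ 0 := fun hh => h20 (σ.injective hh)
  have hσ21 : σ 2 ≠ σ 1 := fun hh => h21 (σ.injective hh)
  have hv2 : (σ 2 : ℕ) < m := by
    have hlt := (σ 2).isLt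
    rw [Fin.ext_iff, Fin.val_last] at h
    rw [Ne, Fin.ext_iff, h0] at hσ20
    rw [Ne, Fin.ext_iff, h1] at hσ21
    simp at hσ20 hσ21
    omega
  set d := σ.symm (Fin.last (m+2)) with hd
  have hσd : σ d = Fin.last (m+2) := σ.apply_symm_apply _
  have hd0 : d ≠ 0 := symm_ne σ (by rw [h0, Ne, Fin.ext_iff, Fin.val_last]; simp only; omega)
  have hd1 : d ≠ 1 := symm_ne σ (by rw [h1, Ne, Fin.ext_iff, Fin.val_last]; simp only; omega)
  have hd2 : d ≠ 2 := symm_ne σ h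
  have h2d : (2 : Fin (m+3)) < d := by
    rw [Ne, Fin.ext_iff] at hd0 hd1 hd2
    rw [Fin.lt_def]
    simp only [Fin.val_zero, fin_val_one, fin_val_two] at hd0 hd1 hd2 ⊢
    omega
  refine hA.2.2 (contains3214 σ (show (0:Fin (m+3)) < 1 by
      rw [Fin.lt_def]; simp [fin_val_one])
    (show (1:Fin (m+3)) < 2 by rw [Fin.lt_def]; simp [fin_val_one, fin_val_two, Nat.mod_eq_of_lt (show 2 < m+3 by omega)])
    h2d ?_ ?_ ?_)
  · rw [h1, Fin.lt_def]; simpa using hv2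
  · rw [h0, h1, Fin.lt_def]; simp
  · rw [h0, hσd, Fin.lt_def, Fin.val_last]; simp only; omega

end S5

section S6

open Equiv

lemma card_split {α : Type*} [Finite α] (P Q : α → Prop) :
    Nat.card {x : α // P x} =
      Nat.card {x : α // P x ∧ Q x} + Nat.card {x : α // P x ∧ ¬ Q x} := by
  classical
  have e1 : {x : α // P x} ≃ {y : {x : α // P x} // Q y.1} ⊕ {y : {x : α // P x} // ¬ Q y.1} :=
    (Equiv.sumCompl fun y : {x : α // P x} => Q y.1).symm
  rw [Nat.card_congr e1, Nat.card_sum,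
    Nat.card_congr (Equiv.subtypeSubtypeEquivSubtypeInter P Q),
    Nat.card_congr (Equiv.subtypeSubtypeEquivSubtypeInter P (fun x => ¬ Q x))]

lemma succAbove_eq_last_iff {n : ℕ} {v : Fin (n+2)} (hv : v ≠ Fin.last (n+1)) {x : Fin (n+1)} :
    v.succAbove x = Fin.last (n+1) ↔ x = Fin.last n := by
  have hle : v ≤ (Fin.last n).castSucc := by
    rw [Ne, Fin.ext_iff, Fin.val_last] at hv
    have := v.isLt
    rw [Fin.le_def, Fin.coe_castSucc, Fin.val_last]
    omega
  have hlast : v.succAbove (Fin.last n) = Fin.last (n+1) := by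
    rw [Fin.succAbove_of_le_castSucc _ _ hle, Fin.succ_last]
  constructor
  · intro h
    exact Fin.succAbove_right_injective (p := v) (h.trans hlast.symm)
  · intro h
    rw [h, hlast]

lemma castSucc_last_ne_last {n : ℕ} : (Fin.last n).castSucc ≠ Fin.last (n+1) := by
  rw [Ne, Fin.ext_iff, Fin.coe_castSucc, Fin.val_last, Fin.val_last]
  omega

/-- Step equiv 1: peel a permutation starting with the top value. -/
def equivTop {n : ℕ} :
    {σ : Equiv.Perm (Fin (n+1)) // σ 0 = Fin.last n ∧ AllAvoid σ} ≃
      {τ : Equiv.Perm (Fin n) // AllAvoid τ} :=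
  ((Equiv.subtypeSubtypeEquivSubtypeInter (fun σ : Equiv.Perm (Fin (n+1)) => σ 0 = Fin.last n)
      AllAvoid).symm).trans
    (Equiv.subtypeEquiv (peel (Fin.last n)) fun σ => allAvoid_peel_top σ)

/-- Step equiv 2: peel a permutation starting with (second, top). -/
def equivSecondTop {n : ℕ} :
    {σ : Equiv.Perm (Fin (n+2)) //
        σ 0 = (Fin.last n).castSucc ∧ (AllAvoid σ ∧ σ 1 = Fin.last (n+1))} ≃
      {τ : Equiv.Perm (Fin (n+1)) // τ 0 = Fin.last n ∧ AllAvoid τ} :=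
  ((Equiv.subtypeSubtypeEquivSubtypeInter
      (fun σ : Equiv.Perm (Fin (n+2)) => σ 0 = (Fin.last n).castSucc)
      (fun σ => AllAvoid σ ∧ σ 1 = Fin.last (n+1))).symm).trans
    (Equiv.subtypeEquiv (peel ((Fin.last n).castSucc)) (by
      intro x
      have hkey : x.1 1 = ((Fin.last n).castSucc).succAbove (peel ((Fin.last n).castSucc) x 0) := by
        rw [fin_one_eq_succ_zero]
        exact peel_key _ x 0
      have hcond : x.1 1 = Fin.last (n+1) ↔ peel ((Fin.last n).castSucc) x 0 = Fin.last n := by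
        rw [hkey]
        exact succAbove_eq_last_iff castSucc_last_ne_last
      constructor
      · rintro ⟨hA, h1⟩
        exact ⟨hcond.mp h1, (allAvoid_peel_second x 1 h1 (by rw [fin_val_one]; omega)).mp hA⟩
      · rintro ⟨h0, hA⟩
        have h1 : x.1 1 = Fin.last (n+1) := hcond.mpr h0
        exact ⟨(allAvoid_peel_second x 1 h1 (by rw [fin_val_one]; omega)).mpr hA, h1⟩))

/-- Step equiv 3: peel a permutation starting with (second, third, top). -/
def equivSecond2 {n : ℕ} :
    {σ : Equiv.Perm (Fin (n+3)) //
        σ 0 = (Fin.last (n+1)).castSucc ∧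
          (AllAvoid σ ∧ (σ 1 = ((Fin.last n).castSucc).castSucc ∧ σ 2 = Fin.last (n+2)))} ≃
      {τ : Equiv.Perm (Fin (n+2)) //
        τ 0 = (Fin.last n).castSucc ∧ (AllAvoid τ ∧ τ 1 = Fin.last (n+1))} :=
  ((Equiv.subtypeSubtypeEquivSubtypeInter
      (fun σ : Equiv.Perm (Fin (n+3)) => σ 0 = (Fin.last (n+1)).castSucc)
      (fun σ => AllAvoid σ ∧ (σ 1 = ((Fin.last n).castSucc).castSucc ∧
        σ 2 = Fin.last (n+2)))).symm).trans
    (Equiv.subtypeEquiv (peel ((Fin.last (n+1)).castSucc)) (by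
      intro x
      have hkey1 : x.1 1 =
          ((Fin.last (n+1)).castSucc).succAbove (peel ((Fin.last (n+1)).castSucc) x 0) := by
        rw [fin_one_eq_succ_zero]
        exact peel_key _ x 0
      have hkey2 : x.1 2 =
          ((Fin.last (n+1)).castSucc).succAbove (peel ((Fin.last (n+1)).castSucc) x 1) := by
        rw [fin_two_eq_succ_one]
        exact peel_key _ x 1
      have hmid : ((Fin.last (n+1)).castSucc).succAbove ((Fin.last n).castSucc)
          = ((Fin.last n).castSucc).castSucc := by
        apply Fin.succAbove_of_castSucc_lt
        rw [Fin.lt_def, Fin.coe_castSucc, Fin.coe_castSucc, Fin.val_last,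
          Fin.coe_castSucc, Fin.val_last]
        omega
      have hcond1 : x.1 1 = ((Fin.last n).castSucc).castSucc ↔
          peel ((Fin.last (n+1)).castSucc) x 0 = (Fin.last n).castSucc := by
        rw [hkey1]
        constructor
        · intro h
          exact Fin.succAbove_right_injective (p := (Fin.last (n+1)).castSucc)
            (h.trans hmid.symm)
        · intro h
          rw [h, hmid]
      have hcond2 : x.1 2 = Fin.last (n+2) ↔
          peel ((Fin.last (n+1)).castSucc) x 1 = Fin.last (n+1) := by
        rw [hkey2]
        exact succAbove_eq_last_iff castSucc_last_ne_last
      constructor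
      · rintro ⟨hA, h1, h2⟩
        exact ⟨hcond1.mp h1,
          (allAvoid_peel_second x 2 h2 (by rw [fin_val_two]; omega)).mp hA, hcond2.mp h2⟩
      · rintro ⟨h0, hA, h1⟩
        have h2 : x.1 2 = Fin.last (n+2) := hcond2.mpr h1
        exact ⟨(allAvoid_peel_second x 2 h2 (by rw [fin_val_two]; omega)).mpr hA,
          hcond1.mpr h0, h2⟩))

end S6

section S7

open Equiv

lemma mk_eq_castSucc_last {m : ℕ} :
    (⟨m+1, by omega⟩ : Fin (m+3)) = (Fin.last (m+1)).castSucc := by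
  apply Fin.ext
  simp

lemma mk_eq_castSucc_castSucc_last {m : ℕ} :
    (⟨m, by omega⟩ : Fin (m+3)) = ((Fin.last m).castSucc).castSucc := by
  apply Fin.ext
  simp

lemma card_rec (m : ℕ) :
    Nat.card {σ : Equiv.Perm (Fin (m+3)) // AllAvoid σ} =
      Nat.card {σ : Equiv.Perm (Fin (m+2)) // AllAvoid σ} +
      Nat.card {σ : Equiv.Perm (Fin (m+1)) // AllAvoid σ} +
      Nat.card {σ : Equiv.Perm (Fin m) // AllAvoid σ} := by
  have e1 : {σ : Equiv.Perm (Fin (m+3)) // AllAvoid σ ∧ σ 0 = Fin.last (m+2)} ≃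
      {τ : Equiv.Perm (Fin (m+2)) // AllAvoid τ} :=
    (Equiv.subtypeEquivRight (fun σ => and_comm)).trans equivTop
  have e2 : {σ : Equiv.Perm (Fin (m+3)) //
        (AllAvoid σ ∧ ¬ σ 0 = Fin.last (m+2)) ∧ σ 1 = Fin.last (m+2)} ≃
      {τ : Equiv.Perm (Fin (m+1)) // AllAvoid τ} := by
    refine (Equiv.subtypeEquivRight ?_).trans (equivSecondTop.trans equivTop)
    intro σ
    constructor
    · rintro ⟨⟨hA, hne⟩, h1⟩
      refine ⟨?_, hA, h1⟩
      rw [← mk_eq_castSucc_last]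
      exact struct0 σ hA hne
    · rintro ⟨h0, hA, h1⟩
      exact ⟨⟨hA, by rw [h0]; exact castSucc_last_ne_last⟩, h1⟩
  have e3 : {σ : Equiv.Perm (Fin (m+3)) //
        (AllAvoid σ ∧ ¬ σ 0 = Fin.last (m+2)) ∧ ¬ σ 1 = Fin.last (m+2)} ≃
      {τ : Equiv.Perm (Fin m) // AllAvoid τ} := by
    refine (Equiv.subtypeEquivRight ?_).trans
      (equivSecond2.trans (equivSecondTop.trans equivTop))
    intro σ
    constructor
    · rintro ⟨⟨hA, hne0⟩, hne1⟩
      have h0 := struct0 σ hA hne0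
      have h1 := struct1 σ hA h0 hne1
      have h2 := struct2 σ hA h0 h1
      refine ⟨mk_eq_castSucc_last ▸ h0, hA, mk_eq_castSucc_castSucc_last ▸ h1, h2⟩
    · rintro ⟨h0, hA, h1, h2⟩
      refine ⟨⟨hA, by rw [h0]; exact castSucc_last_ne_last⟩, ?_⟩
      rw [h1]
      intro hc
      rw [Fin.ext_iff] at hc
      simp at hc
  rw [card_split (fun σ : Equiv.Perm (Fin (m+3)) => AllAvoid σ)
      (fun σ => σ 0 = Fin.last (m+2)),
    card_split (fun σ : Equiv.Perm (Fin (m+3)) => AllAvoid σ ∧ ¬ σ 0 = Fin.last (m+2))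
      (fun σ => σ 1 = Fin.last (m+2)),
    Nat.card_congr e1, Nat.card_congr e2, Nat.card_congr e3]
  exact (add_assoc _ _ _).symm

end S7

theorem stmt1 (a : ℕ → ℕ)
    (ha : ∀ n, a n = Nat.card {σ : Equiv.Perm (Fin n) //
      PermAvoids σ p123 ∧ PermAvoids σ p132 ∧ PermAvoids σ (![2, 1, 0, 3] : Fin 4 → Fin 4)}) :
    ∀ n, 5 ≤ n → a n = a (n - 1) + a (n - 2) + a (n - 3) := by
  intro n hn
  obtain ⟨m, rfl⟩ : ∃ m, n = m + 3 := ⟨n - 3, by omega⟩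
  have h1 : m + 3 - 1 = m + 2 := by omega
  have h2 : m + 3 - 2 = m + 1 := by omega
  have h3 : m + 3 - 3 = m := by omega
  rw [h1, h2, h3, ha (m+3), ha (m+2), ha (m+1), ha m]
  exact card_rec m
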